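/- For all positive integers m and n, the rectilinear crossing number of the complete bipartite graph K_{m,n} satisfies rcr(K_{m,n}) ≤ Z(m,n) := ⌊m/2⌋·⌊(m−1)/2⌋·⌊n/2⌋·⌊(n−1)/2⌋. -/

import Mathlib

/-- A rectilinear drawing: an injective map of the vertices into the plane
with no three vertex images collinear. -/
def IsRectilinearDrawing {V : Type*} (f : V → ℝ × ℝ) : Prop :=
  Function.Injective f ∧
    ∀ a b c : V, a ≠ b → a ≠ c → b ≠ c →
      ¬ Collinear ℝ ({f a, f b, f c} : Set (ℝ × ℝ))

/-- The open straight-line segment joining the images of the endpoints of an edge. -/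
def edgeSeg {V : Type*} (f : V → ℝ × ℝ) : Sym2 V → Set (ℝ × ℝ) :=
  Sym2.lift ⟨fun a b => openSegment ℝ (f a) (f b), fun a b => openSegment_symm ℝ (f a) (f b)⟩

/-- Two edges (with disjoint vertex sets) cross if their open segments meet. -/
def EdgesCross {V : Type*} (f : V → ℝ × ℝ) (e₁ e₂ : Sym2 V) : Prop :=
  (∀ v, v ∈ e₁ → v ∉ e₂) ∧ (edgeSeg f e₁ ∩ edgeSeg f e₂).Nonempty

lemma edgesCross_symm {V : Type*} (f : V → ℝ × ℝ) : Symmetric (EdgesCross f) :=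
  fun _ _ h => ⟨fun v hv hv' => h.1 v hv' hv, by rw [Set.inter_comm]; exact h.2⟩

/-- The crossing number of a drawing: the number of unordered pairs of edges of `G`
that cross in the drawing. -/
noncomputable def crossingNumber {V : Type*} (G : SimpleGraph V) (f : V → ℝ × ℝ) : ℕ :=
  Set.ncard {p : Sym2 (Sym2 V) |
    (∀ e ∈ p, e ∈ G.edgeSet) ∧ p ∈ Sym2.fromRel (⟨fun _ _ h => edgesCross_symm f h⟩ : Std.Symm (EdgesCross f))}

/-- The rectilinear crossing number of a graph. -/
noncomputable def rcr {V : Type*} (G : SimpleGraph V) : ℕ :=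
  sInf {k | ∃ f : V → ℝ × ℝ, IsRectilinearDrawing f ∧ crossingNumber G f = k}

/-- The complete balanced `r`-partite graph with `r` parts of size `m`. -/
def completeBalanced (r m : ℕ) : SimpleGraph (Fin r × Fin m) :=
  SimpleGraph.comap Prod.fst ⊤

instance (r m : ℕ) : DecidableRel (completeBalanced r m).Adj :=
  fun u v => inferInstanceAs (Decidable (u.1 ≠ v.1))

/-- The balanced layered graph with `r` layers of size `m`: all edges between
consecutive layers. -/
def layeredGraph (r m : ℕ) : SimpleGraph (Fin r × Fin m) where
  Adj u v := u.1.1 + 1 = v.1.1 ∨ v.1.1 + 1 = u.1.1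
  symm := ⟨fun _ _ h => h.symm⟩
  loopless := ⟨fun u h => by cases h <;> omega⟩

instance (r m : ℕ) : DecidableRel (layeredGraph r m).Adj :=
  fun u v => inferInstanceAs (Decidable (u.1.1 + 1 = v.1.1 ∨ v.1.1 + 1 = u.1.1))

/-- The `s`-fold blow-up of a graph `G`. -/
def blowup {V : Type*} (G : SimpleGraph V) (s : ℕ) : SimpleGraph (V × Fin s) :=
  SimpleGraph.comap Prod.fst G

namespace S16
noncomputable section
open Finset

/-! ### Linear algebra in the plane -/

def DD (a b : ℝ × ℝ) : ℝ := a.1 * b.2 - a.2 * b.1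

def Pt (e a : ℝ) : ℝ × ℝ := (a, e * a ^ 2)
def Qt (e c : ℝ) : ℝ × ℝ := (-(e * c ^ 2), c)

def Bx (e a b c : ℝ) : ℝ := -c - e * (e * c ^ 2 * (a + b) + a * b)
def By (e a c d : ℝ) : ℝ := -a + e * (c * d - e * a ^ 2 * (c + d))

lemma DD_PP (e a b c : ℝ) :
    DD (Qt e c - Pt e a) (Pt e b - Pt e a) = (b - a) * Bx e a b c := by
  simp only [DD, Qt, Pt, Bx, Prod.fst_sub, Prod.snd_sub]; ring

lemma DD_QQ (e a c d : ℝ) :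
    DD (Qt e c - Pt e a) (Qt e d - Pt e a) = (d - c) * By e a c d := by
  simp only [DD, Qt, Pt, By, Prod.fst_sub, Prod.snd_sub]; ring

lemma DD_PPP (e a b c : ℝ) :
    DD (Pt e b - Pt e a) (Pt e c - Pt e a) = e * ((b - a) * (c - a) * (c - b)) := by
  simp only [DD, Pt, Prod.fst_sub, Prod.snd_sub]; ring

lemma DD_QQQ (e a b c : ℝ) :
    DD (Qt e b - Qt e a) (Qt e c - Qt e a) = e * ((b - a) * (c - a) * (c - b)) := by
  simp only [DD, Qt, Prod.fst_sub, Prod.snd_sub]; ring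

section Bounds
variable {e Mr Nr a b c d : ℝ}

lemma Bx_sign (he : 0 < e)
    (hC1 : e * (e * Nr ^ 2 * (2 * Mr) + Mr ^ 2) < 1)
    (haM : |a| ≤ Mr) (hbM : |b| ≤ Mr) (hc1 : 1 ≤ |c|) (hcN : |c| ≤ Nr) :
    c * Bx e a b c < 0 := by
  have hX : |e * c ^ 2 * (a + b) + a * b| ≤ e * Nr ^ 2 * (2 * Mr) + Mr ^ 2 := by
    have h1 : |e * c ^ 2 * (a + b)| ≤ e * Nr ^ 2 * (2 * Mr) := by
      rw [abs_mul, abs_mul, abs_of_pos he, abs_pow]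
      have h3 : |a + b| ≤ 2 * Mr := (abs_add_le a b).trans (by linarith)
      have h4 : |c| ^ 2 ≤ Nr ^ 2 := by nlinarith [abs_nonneg c]
      have hNr0 : (0:ℝ) ≤ Nr := (abs_nonneg c).trans hcN
      exact mul_le_mul (mul_le_mul_of_nonneg_left h4 he.le) h3 (abs_nonneg _) (by positivity)
    have h2 : |a * b| ≤ Mr ^ 2 := by
      rw [abs_mul]; nlinarith [abs_nonneg a, abs_nonneg b]
    calc |e * c ^ 2 * (a + b) + a * b| ≤ |e * c ^ 2 * (a + b)| + |a * b| := abs_add_le _ _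
      _ ≤ _ := by linarith
  have hX1 : |e * (e * c ^ 2 * (a + b) + a * b)| < 1 := by
    rw [abs_mul, abs_of_pos he]
    calc e * |e * c ^ 2 * (a + b) + a * b| ≤ e * (e * Nr ^ 2 * (2 * Mr) + Mr ^ 2) := by
          exact mul_le_mul_of_nonneg_left hX he.le
      _ < 1 := hC1
  set X := e * (e * c ^ 2 * (a + b) + a * b) with hXdef
  have hcX : |c * X| < |c| := by
    rw [abs_mul]
    calc |c| * |X| < |c| * 1 := by
          apply mul_lt_mul_of_pos_left hX1; linarith
      _ = |c| := mul_one _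
  have h5 : |c| ≤ c ^ 2 := by nlinarith [abs_nonneg c, sq_abs c]
  have h6 : -(c * X) ≤ |c * X| := neg_le_abs _
  have : c * Bx e a b c = -c ^ 2 - c * X := by rw [Bx]; ring
  rw [this]
  linarith

lemma By_sign (he : 0 < e)
    (hC2 : e * (Nr ^ 2 + e * Mr ^ 2 * (2 * Nr)) < 1)
    (ha1 : 1 ≤ |a|) (haM : |a| ≤ Mr) (hcN : |c| ≤ Nr) (hdN : |d| ≤ Nr) :
    a * By e a c d < 0 := by
  have hX : |c * d - e * a ^ 2 * (c + d)| ≤ Nr ^ 2 + e * Mr ^ 2 * (2 * Nr) := by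
    have h1 : |e * a ^ 2 * (c + d)| ≤ e * Mr ^ 2 * (2 * Nr) := by
      rw [abs_mul, abs_mul, abs_of_pos he, abs_pow]
      have h3 : |c + d| ≤ 2 * Nr := (abs_add_le c d).trans (by linarith)
      have h4 : |a| ^ 2 ≤ Mr ^ 2 := by nlinarith [abs_nonneg a]
      have hMr0 : (0:ℝ) ≤ Mr := (abs_nonneg a).trans haM
      exact mul_le_mul (mul_le_mul_of_nonneg_left h4 he.le) h3 (abs_nonneg _) (by positivity)
    have h2 : |c * d| ≤ Nr ^ 2 := by
      rw [abs_mul]; nlinarith [abs_nonneg c, abs_nonneg d]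
    calc |c * d - e * a ^ 2 * (c + d)| ≤ |c * d| + |e * a ^ 2 * (c + d)| := abs_sub _ _
      _ ≤ _ := by linarith
  have hX1 : |e * (c * d - e * a ^ 2 * (c + d))| < 1 := by
    rw [abs_mul, abs_of_pos he]
    calc e * |c * d - e * a ^ 2 * (c + d)| ≤ e * (Nr ^ 2 + e * Mr ^ 2 * (2 * Nr)) :=
          mul_le_mul_of_nonneg_left hX he.le
      _ < 1 := hC2
  set X := e * (c * d - e * a ^ 2 * (c + d)) with hXdef
  have haX : |a * X| < |a| := by
    rw [abs_mul]
    calc |a| * |X| < |a| * 1 := by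
          apply mul_lt_mul_of_pos_left hX1; linarith
      _ = |a| := mul_one _
  have h5 : |a| ≤ a ^ 2 := by nlinarith [abs_nonneg a, sq_abs a]
  have h6 : a * X ≤ |a * X| := le_abs_self _
  have : a * By e a c d = -a ^ 2 + a * X := by rw [By]; ring
  rw [this]
  linarith

end Bounds


lemma openSegment_mem {P Q z : ℝ × ℝ} (h : z ∈ openSegment ℝ P Q) :
    ∃ a b : ℝ, 0 < a ∧ 0 < b ∧ a + b = 1 ∧
      a * P.1 + b * Q.1 = z.1 ∧ a * P.2 + b * Q.2 = z.2 := by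
  obtain ⟨a, b, ha, hb, hab, hz⟩ := h
  exact ⟨a, b, ha, hb, hab, by rw [← hz]; simp [Prod.smul_fst, smul_eq_mul],
    by rw [← hz]; simp [Prod.smul_snd, smul_eq_mul]⟩

lemma not_collinear_of_DD {p q r : ℝ × ℝ} (h : DD (q - p) (r - p) ≠ 0) :
    ¬ Collinear ℝ ({p, q, r} : Set (ℝ × ℝ)) := by
  intro hc
  rw [collinear_iff_of_mem (Set.mem_insert p _)] at hc
  obtain ⟨v, hv⟩ := hc
  obtain ⟨rq, hq⟩ := hv q (by simp)
  obtain ⟨rr, hr⟩ := hv r (by simp)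
  apply h
  have hq' : q - p = rq • v := by rw [hq]; simp [vadd_eq_add]
  have hr' : r - p = rr • v := by rw [hr]; simp [vadd_eq_add]
  rw [hq', hr']
  simp only [DD, Prod.smul_fst, Prod.smul_snd, smul_eq_mul]
  ring

lemma cross_DD {P Q R S z : ℝ × ℝ}
    (h1 : z ∈ openSegment ℝ P Q) (h2 : z ∈ openSegment ℝ R S) :
    (DD (Q - P) (S - R) = 0 ∧ DD (S - R) (P - R) = 0 ∧ DD (Q - P) (R - P) = 0) ∨
    (DD (Q - P) (R - P) * DD (Q - P) (S - P) < 0 ∧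
     DD (S - R) (P - R) * DD (S - R) (Q - R) < 0) := by
  obtain ⟨a, b, ha, hb, hab, e1, e2⟩ := openSegment_mem h1
  obtain ⟨c, d, hc, hd, hcd, e3, e4⟩ := openSegment_mem h2
  have ha' : a = 1 - b := by linarith
  have hc' : c = 1 - d := by linarith
  subst ha' hc'
  set V := DD (Q - P) (S - R) with hV
  have i1 : DD (S - R) (P - R) = b * V := by
    simp only [DD, hV, Prod.fst_sub, Prod.snd_sub]
    linear_combination (S.1 - R.1) * (e2 - e4) - (S.2 - R.2) * (e1 - e3)
  have i2 : DD (S - R) (Q - R) = -(1 - b) * V := by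
    simp only [DD, hV, Prod.fst_sub, Prod.snd_sub]
    linear_combination (S.1 - R.1) * (e2 - e4) - (S.2 - R.2) * (e1 - e3)
  have i3 : DD (Q - P) (R - P) = -d * V := by
    simp only [DD, hV, Prod.fst_sub, Prod.snd_sub]
    linear_combination (Q.2 - P.2) * (e1 - e3) - (Q.1 - P.1) * (e2 - e4)
  have i4 : DD (Q - P) (S - P) = (1 - d) * V := by
    simp only [DD, hV, Prod.fst_sub, Prod.snd_sub]
    linear_combination (Q.2 - P.2) * (e1 - e3) - (Q.1 - P.1) * (e2 - e4)
  rcases eq_or_ne V 0 with hV0 | hV0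
  · exact Or.inl ⟨hV0, by rw [i1, hV0]; ring, by rw [i3, hV0]; ring⟩
  · refine Or.inr ⟨?_, ?_⟩
    · rw [i3, i4]; nlinarith [mul_pos hd hc, mul_self_pos.mpr hV0]
    · rw [i1, i2]; nlinarith [mul_pos hb ha, mul_self_pos.mpr hV0]

lemma lin_openSegment {u v : ℝ} {P Q z : ℝ × ℝ} (h : z ∈ openSegment ℝ P Q)
    (hP : 0 < u * P.1 + v * P.2) (hQ : 0 < u * Q.1 + v * Q.2) :
    0 < u * z.1 + v * z.2 := by
  obtain ⟨a, b, ha, hb, hab, e1, e2⟩ := openSegment_mem h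
  have key : u * z.1 + v * z.2 = a * (u * P.1 + v * P.2) + b * (u * Q.1 + v * Q.2) := by
    linear_combination (-u) * e1 + (-v) * e2
  rw [key]
  have := mul_pos ha hP
  have := mul_pos hb hQ
  linarith

lemma sign_aux {T P x : ℝ} (h1 : T * P < 0) (h2 : 0 < x * P) : T * x < 0 := by
  rcases mul_neg_iff.1 h1 with ⟨hT, hP⟩ | ⟨hT, hP⟩ <;>
    rcases mul_pos_iff.1 h2 with ⟨hx, hP'⟩ | ⟨hx, hP'⟩ <;>
      first
        | linarith
        | exact mul_neg_of_pos_of_neg hT hx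
        | exact mul_neg_of_neg_of_pos hT hx

lemma sign_aux2 {T x y : ℝ} (h1 : T * x < 0) (h2 : T * y < 0) : 0 < x * y := by
  rcases mul_neg_iff.1 h1 with ⟨hT, hx⟩ | ⟨hT, hx⟩ <;>
    rcases mul_neg_iff.1 h2 with ⟨hT', hy⟩ | ⟨hT', hy⟩ <;>
      first
        | linarith
        | exact mul_pos_of_neg_of_neg hx hy
        | exact mul_pos hx hy

section Pair
variable {e Mr Nr : ℝ}

lemma pair_cross (he : 0 < e)
    (hC1 : e * (e * Nr ^ 2 * (2 * Mr) + Mr ^ 2) < 1)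
    (hC2 : e * (Nr ^ 2 + e * Mr ^ 2 * (2 * Nr)) < 1)
    (heM : e * Mr ^ 2 < 1) (heN : e * Nr ^ 2 < 1)
    {a b c d : ℝ}
    (ha1 : 1 ≤ |a|) (haM : |a| ≤ Mr) (hb1 : 1 ≤ |b|) (hbM : |b| ≤ Mr)
    (hc1 : 1 ≤ |c|) (hcN : |c| ≤ Nr) (hd1 : 1 ≤ |d|) (hdN : |d| ≤ Nr)
    (hab : a ≠ b) (hcd : c ≠ d)
    (hx : (openSegment ℝ (Pt e a) (Qt e c) ∩ openSegment ℝ (Pt e b) (Qt e d)).Nonempty) :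
    0 < a * b ∧ 0 < c * d ∧ (b - a) * (d - c) * a * c < 0 ∧ (a - b) * (c - d) * b * d < 0 := by
  obtain ⟨z, hz1, hz2⟩ := hx
  have hBx1 : c * Bx e a b c < 0 := Bx_sign he hC1 haM hbM hc1 hcN
  have hBx2 : d * Bx e b a d < 0 := Bx_sign he hC1 hbM haM hd1 hdN
  have hBy1 : a * By e a c d < 0 := By_sign he hC2 ha1 haM hcN hdN
  have hBy2 : b * By e b d c < 0 := By_sign he hC2 hb1 hbM hdN hcN
  -- squared bounds
  have hNc2 : c ^ 2 ≤ Nr ^ 2 := by nlinarith [abs_nonneg c, sq_abs c]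
  have hNd2 : d ^ 2 ≤ Nr ^ 2 := by nlinarith [abs_nonneg d, sq_abs d]
  have hMa2 : a ^ 2 ≤ Mr ^ 2 := by nlinarith [abs_nonneg a, sq_abs a]
  have hMb2 : b ^ 2 ≤ Mr ^ 2 := by nlinarith [abs_nonneg b, sq_abs b]
  have hea : e * a ^ 2 < 1 := lt_of_le_of_lt (mul_le_mul_of_nonneg_left hMa2 he.le) heM
  have heb : e * b ^ 2 < 1 := lt_of_le_of_lt (mul_le_mul_of_nonneg_left hMb2 he.le) heM
  have hec : e * c ^ 2 < 1 := lt_of_le_of_lt (mul_le_mul_of_nonneg_left hNc2 he.le) heN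
  have hed : e * d ^ 2 < 1 := lt_of_le_of_lt (mul_le_mul_of_nonneg_left hNd2 he.le) heN
  have h0a : 0 ≤ e * a ^ 2 := by positivity
  have h0b : 0 ≤ e * b ^ 2 := by positivity
  have h0c : 0 ≤ e * c ^ 2 := by positivity
  have h0d : 0 ≤ e * d ^ 2 := by positivity
  rcases cross_DD hz1 hz2 with ⟨hV, h1, h2⟩ | ⟨h1, h2⟩
  · exfalso
    rw [DD_PP] at h1
    rcases mul_eq_zero.1 h1 with h | h
    · exact hab (sub_eq_zero.1 h)
    · rw [h, mul_zero] at hBx2; exact lt_irrefl 0 hBx2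
  · rw [DD_PP, DD_QQ] at h1
    rw [DD_PP, DD_QQ] at h2
    have k1 : ((b - a) * (d - c)) * (Bx e a b c * By e a c d) < 0 := by
      have hre : ((b - a) * (d - c)) * (Bx e a b c * By e a c d)
          = (b - a) * Bx e a b c * ((d - c) * By e a c d) := by ring
      rw [hre]; exact h1
    have k2 : ((a - b) * (c - d)) * (Bx e b a d * By e b d c) < 0 := by
      have hre : ((a - b) * (c - d)) * (Bx e b a d * By e b d c)
          = (a - b) * Bx e b a d * ((c - d) * By e b d c) := by ring
      rw [hre]; exact h2
    have q1 : 0 < (a * c) * (Bx e a b c * By e a c d) := by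
      have hre : (a * c) * (Bx e a b c * By e a c d)
          = (c * Bx e a b c) * (a * By e a c d) := by ring
      rw [hre]; exact mul_pos_of_neg_of_neg hBx1 hBy1
    have q2 : 0 < (b * d) * (Bx e b a d * By e b d c) := by
      have hre : (b * d) * (Bx e b a d * By e b d c)
          = (d * Bx e b a d) * (b * By e b d c) := by ring
      rw [hre]; exact mul_pos_of_neg_of_neg hBx2 hBy2
    have Tac : ((b - a) * (d - c)) * (a * c) < 0 := sign_aux k1 q1
    have Tbd : ((a - b) * (c - d)) * (b * d) < 0 := sign_aux k2 q2
    have Tbd' : ((b - a) * (d - c)) * (b * d) < 0 := by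
      have : ((a - b) * (c - d)) = ((b - a) * (d - c)) := by ring
      rwa [this] at Tbd
    have hprod : 0 < (a * b) * (c * d) := by
      have hre : (a * b) * (c * d) = (a * c) * (b * d) := by ring
      rw [hre]; exact sign_aux2 Tac Tbd'
    have sa := le_abs'.1 ha1
    have sb := le_abs'.1 hb1
    have sc := le_abs'.1 hc1
    have sd := le_abs'.1 hd1
    have habpos : 0 < a * b := by
      rcases lt_trichotomy (a * b) 0 with hn | hz | hp
      · exfalso
        have hcdneg : c * d < 0 := by
          rcases mul_pos_iff.1 hprod with ⟨p1, p2⟩ | ⟨p1, p2⟩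
          · linarith
          · linarith
        have hsab : (1 ≤ a ∧ b ≤ -1) ∨ (a ≤ -1 ∧ 1 ≤ b) := by
          rcases sa with h | h <;> rcases sb with h' | h'
          · linarith [mul_pos_of_neg_of_neg (show a < 0 by linarith) (show b < 0 by linarith)]
          · exact Or.inr ⟨h, h'⟩
          · exact Or.inl ⟨h, h'⟩
          · linarith [mul_pos (show (0:ℝ) < a by linarith) (show (0:ℝ) < b by linarith)]
        have hscd : (1 ≤ c ∧ d ≤ -1) ∨ (c ≤ -1 ∧ 1 ≤ d) := by
          rcases sc with h | h <;> rcases sd with h' | h'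
          · linarith [mul_pos_of_neg_of_neg (show c < 0 by linarith) (show d < 0 by linarith)]
          · exact Or.inr ⟨h, h'⟩
          · exact Or.inl ⟨h, h'⟩
          · linarith [mul_pos (show (0:ℝ) < c by linarith) (show (0:ℝ) < d by linarith)]
        rcases hsab with ⟨ha', hb'⟩ | ⟨ha', hb'⟩ <;> rcases hscd with ⟨hc', hd'⟩ | ⟨hc', hd'⟩
        · -- 1 ≤ a, b ≤ -1, 1 ≤ c, d ≤ -1 : seg1 x+y>0, seg2 x+y<0
          have s1 : 0 < (1 : ℝ) * z.1 + (1 : ℝ) * z.2 :=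
            lin_openSegment hz1 (by simp only [Pt]; linarith) (by simp only [Qt]; linarith)
          have s2 : 0 < (-1 : ℝ) * z.1 + (-1 : ℝ) * z.2 :=
            lin_openSegment hz2 (by simp only [Pt]; linarith) (by simp only [Qt]; linarith)
          linarith
        · -- 1 ≤ a, b ≤ -1, c ≤ -1, 1 ≤ d : seg1 x-y>0, seg2 x-y<0
          have s1 : 0 < (1 : ℝ) * z.1 + (-1 : ℝ) * z.2 :=
            lin_openSegment hz1 (by simp only [Pt]; linarith) (by simp only [Qt]; linarith)
          have s2 : 0 < (-1 : ℝ) * z.1 + (1 : ℝ) * z.2 :=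
            lin_openSegment hz2 (by simp only [Pt]; linarith) (by simp only [Qt]; linarith)
          linarith
        · -- a ≤ -1, 1 ≤ b, 1 ≤ c, d ≤ -1 : seg1 x-y<0, seg2 x-y>0
          have s1 : 0 < (-1 : ℝ) * z.1 + (1 : ℝ) * z.2 :=
            lin_openSegment hz1 (by simp only [Pt]; linarith) (by simp only [Qt]; linarith)
          have s2 : 0 < (1 : ℝ) * z.1 + (-1 : ℝ) * z.2 :=
            lin_openSegment hz2 (by simp only [Pt]; linarith) (by simp only [Qt]; linarith)
          linarith
        · -- a ≤ -1, 1 ≤ b, c ≤ -1, 1 ≤ d : seg1 x+y<0, seg2 x+y>0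
          have s1 : 0 < (-1 : ℝ) * z.1 + (-1 : ℝ) * z.2 :=
            lin_openSegment hz1 (by simp only [Pt]; linarith) (by simp only [Qt]; linarith)
          have s2 : 0 < (1 : ℝ) * z.1 + (1 : ℝ) * z.2 :=
            lin_openSegment hz2 (by simp only [Pt]; linarith) (by simp only [Qt]; linarith)
          linarith
      · exfalso
        rcases mul_eq_zero.1 hz with h | h
        · rcases sa with h' | h' <;> linarith
        · rcases sb with h' | h' <;> linarith
      · exact hp
    have hcdpos : 0 < c * d := by
      rcases mul_pos_iff.1 hprod with ⟨p1, p2⟩ | ⟨p1, p2⟩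
      · exact p2
      · linarith
    refine ⟨habpos, hcdpos, ?_, ?_⟩
    · have : (b - a) * (d - c) * a * c = ((b - a) * (d - c)) * (a * c) := by ring
      rw [this]; exact Tac
    · have : (a - b) * (c - d) * b * d = ((a - b) * (c - d)) * (b * d) := by ring
      rw [this]; exact Tbd

end Pair


/-! ### Integer labels and counting -/

def Uf (mm : ℕ) (i : Fin mm) : ℤ :=
  if (i : ℕ) < (mm + 1) / 2 then (i : ℤ) + 1 else (((mm + 1) / 2 : ℕ) : ℤ) - (i : ℤ) - 1

lemma Uf_sign (mm : ℕ) (i : Fin mm) : 1 ≤ Uf mm i ∨ Uf mm i ≤ -1 := by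
  unfold Uf; split_ifs with h <;> [left; right] <;> omega

lemma Uf_lb (mm : ℕ) (i : Fin mm) : 1 ≤ |Uf mm i| := by
  rcases Uf_sign mm i with h | h
  · exact le_abs.2 (Or.inl h)
  · exact le_abs.2 (Or.inr (by omega))

lemma Uf_ub (mm : ℕ) (i : Fin mm) : |Uf mm i| ≤ (mm : ℤ) := by
  have := i.isLt
  rw [abs_le]; unfold Uf; split_ifs with h <;> constructor <;> omega

lemma Uf_inj (mm : ℕ) : Function.Injective (Uf mm) := by
  intro i j h
  have hi := i.isLt; have hj := j.isLt
  unfold Uf at h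
  apply Fin.ext
  split_ifs at h <;> omega

lemma Uf_cond (mm : ℕ) (x y : Fin mm) :
    (Uf mm x < Uf mm y ∧ 0 < Uf mm x * Uf mm y) ↔
      (((x : ℕ) < y ∧ (y : ℕ) < (mm + 1) / 2) ∨
        ((mm + 1) / 2 ≤ (y : ℕ) ∧ (y : ℕ) < (x : ℕ))) := by
  have hx := x.isLt; have hy := y.isLt
  unfold Uf; split_ifs with h1 h2 h2
  · constructor
    · rintro ⟨hlt, -⟩; left; omega
    · rintro h
      refine ⟨by omega, mul_pos (by omega) (by omega)⟩
  · constructor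
    · rintro ⟨-, hp⟩
      exfalso
      have : ((x : ℤ) + 1) * ((((mm + 1) / 2 : ℕ) : ℤ) - (y : ℤ) - 1) < 0 :=
        mul_neg_of_pos_of_neg (by omega) (by omega)
      omega
    · rintro h; exfalso; omega
  · constructor
    · rintro ⟨-, hp⟩
      exfalso
      have : ((((mm + 1) / 2 : ℕ) : ℤ) - (x : ℤ) - 1) * ((y : ℤ) + 1) < 0 :=
        mul_neg_of_neg_of_pos (by omega) (by omega)
      omega
    · rintro h; exfalso; omega
  · constructor
    · rintro ⟨hlt, -⟩; right; omega
    · rintro h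
      refine ⟨by omega, mul_pos_of_neg_of_neg (by omega) (by omega)⟩

lemma even_mul_pred (k : ℕ) : Even (k * (k - 1)) := by
  cases k with
  | zero => simp
  | succ j => simpa [Nat.mul_comm] using Nat.even_mul_succ_self j

lemma arith_half (mm : ℕ) :
    (mm + 1) / 2 * ((mm + 1) / 2 - 1) / 2
      + (mm - (mm + 1) / 2) * ((mm - (mm + 1) / 2) - 1) / 2
      = mm / 2 * ((mm - 1) / 2) := by
  rcases Nat.even_or_odd mm with ⟨k, hk⟩ | ⟨k, hk⟩ <;> subst hk
  · have e1 : (k + k + 1) / 2 = k := by omega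
    rw [e1]
    have e2 : k + k - k = k := by omega
    rw [e2]
    have e3 : (k + k) / 2 = k := by omega
    rw [e3]
    have e4 : (k + k - 1) / 2 = k - 1 := by omega
    rw [e4]
    obtain ⟨r, hr⟩ := even_mul_pred k
    set t := k * (k - 1) with ht
    omega
  · have e1 : (2 * k + 1 + 1) / 2 = k + 1 := by omega
    rw [e1]
    have e2 : 2 * k + 1 - (k + 1) = k := by omega
    rw [e2]
    have e3 : k + 1 - 1 = k := by omega
    rw [e3]
    have e4 : (2 * k + 1) / 2 = k := by omega
    rw [e4]
    have e5 : (2 * k + 1 - 1) / 2 = k := by omega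
    rw [e5]
    have hA : (k + 1) * k = k * k + k := by ring
    have hB : k * (k - 1) + k = k * k := by
      cases k with
      | zero => rfl
      | succ j => simp [Nat.succ_sub_one]; ring
    obtain ⟨r, hr⟩ := Nat.even_mul_succ_self k
    obtain ⟨s, hs⟩ := even_mul_pred k
    have hA' : (k + 1) * k = k * (k + 1) := by ring
    set A := (k + 1) * k with hAdef
    set B := k * (k - 1) with hBdef
    set C := k * k with hCdef
    omega

lemma cardA (mm : ℕ) :
    (univ.filter fun x : Fin mm × Fin mm =>
        Uf mm x.1 < Uf mm x.2 ∧ 0 < Uf mm x.1 * Uf mm x.2).card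
      = mm / 2 * ((mm - 1) / 2) := by
  set p := (mm + 1) / 2 with hp
  rw [Finset.card_eq_sum_card_fiberwise
    (f := Prod.snd) (t := univ) (fun x _ => mem_univ _)]
  have hfib : ∀ b : Fin mm,
      ((univ.filter fun x : Fin mm × Fin mm =>
          Uf mm x.1 < Uf mm x.2 ∧ 0 < Uf mm x.1 * Uf mm x.2).filter
        fun x => x.2 = b).card
      = if (b : ℕ) < p then (b : ℕ) else mm - 1 - (b : ℕ) := by
    intro b
    rw [Finset.filter_filter]
    split_ifs with hb
    · rw [← Fin.card_Iio b]
      apply Finset.card_bij (fun x _ => x.1)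
      · intro x hx
        simp only [mem_filter, mem_univ, true_and] at hx
        obtain ⟨hc, hx2⟩ := hx
        rw [Uf_cond] at hc
        simp only [Finset.mem_Iio]
        rw [Fin.lt_def]
        rcases hc with ⟨h1, h2⟩ | ⟨h1, h2⟩ <;> subst hx2 <;> omega
      · intro x hx y hy hxy
        simp only [mem_filter, mem_univ, true_and] at hx hy
        exact Prod.ext hxy (hx.2.trans hy.2.symm)
      · intro a ha
        simp only [Finset.mem_Iio] at ha
        rw [Fin.lt_def] at ha
        refine ⟨(a, b), ?_, rfl⟩
        simp only [mem_filter, mem_univ, true_and]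
        exact ⟨(Uf_cond mm a b).2 (Or.inl ⟨ha, hb⟩), trivial⟩
    · rw [← Fin.card_Ioi b]
      apply Finset.card_bij (fun x _ => x.1)
      · intro x hx
        simp only [mem_filter, mem_univ, true_and] at hx
        obtain ⟨hc, hx2⟩ := hx
        rw [Uf_cond] at hc
        simp only [Finset.mem_Ioi]
        rw [Fin.lt_def]
        rcases hc with ⟨h1, h2⟩ | ⟨h1, h2⟩ <;> subst hx2 <;> omega
      · intro x hx y hy hxy
        simp only [mem_filter, mem_univ, true_and] at hx hy
        exact Prod.ext hxy (hx.2.trans hy.2.symm)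
      · intro a ha
        simp only [Finset.mem_Ioi] at ha
        rw [Fin.lt_def] at ha
        refine ⟨(a, b), ?_, rfl⟩
        simp only [mem_filter, mem_univ, true_and]
        exact ⟨(Uf_cond mm a b).2 (Or.inr ⟨by omega, ha⟩), trivial⟩
  calc (∑ b : Fin mm, ((univ.filter fun x : Fin mm × Fin mm =>
          Uf mm x.1 < Uf mm x.2 ∧ 0 < Uf mm x.1 * Uf mm x.2).filter
        fun x => x.2 = b).card)
      = ∑ b : Fin mm, (if (b : ℕ) < p then (b : ℕ) else mm - 1 - (b : ℕ)) :=
        Finset.sum_congr rfl (fun b _ => hfib b)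
    _ = ∑ k ∈ range mm, (if k < p then k else mm - 1 - k) :=
        Fin.sum_univ_eq_sum_range (fun k => if k < p then k else mm - 1 - k) mm
    _ = mm / 2 * ((mm - 1) / 2) := by
        have hpm : p ≤ mm := by omega
        rw [Finset.range_eq_Ico, ← Finset.sum_Ico_consecutive _ (Nat.zero_le p) hpm]
        have hs1 : ∑ k ∈ Finset.Ico 0 p, (if k < p then k else mm - 1 - k)
            = p * (p - 1) / 2 := by
          rw [← Finset.sum_range_id, Finset.range_eq_Ico]
          exact Finset.sum_congr rfl (fun x hx => by
            simp only [Finset.mem_Ico] at hx; simp [hx.2])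
        have hs2 : ∑ k ∈ Finset.Ico p mm, (if k < p then k else mm - 1 - k)
            = (mm - p) * ((mm - p) - 1) / 2 := by
          rw [Finset.sum_Ico_eq_sum_range]
          have : ∀ j ∈ Finset.range (mm - p),
              (if p + j < p then p + j else mm - 1 - (p + j)) = (mm - p - 1) - j := by
            intro j hj; simp only [Finset.mem_range] at hj
            rw [if_neg (by omega)]; omega
          rw [Finset.sum_congr rfl this]
          rw [← Finset.sum_range_id]
          have := Finset.sum_range_reflect (fun j => j) (mm - p)
          rw [← this]
        rw [hs1, hs2, ← arith_half mm]
  done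


/-! ### The concrete drawing -/

def Kr (m n : ℕ) : ℝ := ((m + n + 1 : ℕ) : ℝ)
def eps (m n : ℕ) : ℝ := (Kr m n ^ 4)⁻¹

section Small
variable (m n : ℕ)

lemma Kr_pos : 0 < Kr m n := by
  unfold Kr; exact_mod_cast Nat.succ_pos _

lemma eps_pos : 0 < eps m n := by
  have := Kr_pos m n; unfold eps; positivity

lemma m_le_Kr : (m : ℝ) ≤ Kr m n := by unfold Kr; exact_mod_cast by omega
lemma n_le_Kr : (n : ℝ) ≤ Kr m n := by unfold Kr; exact_mod_cast by omega

lemma Kr_ge3 (hm : 1 ≤ m) (hn : 1 ≤ n) : 3 ≤ Kr m n := by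
  unfold Kr; exact_mod_cast by omega

lemma K24 (hm : 1 ≤ m) (hn : 1 ≤ n) : Kr m n ^ 2 + 2 < Kr m n ^ 4 := by
  have hK := Kr_ge3 m n hm hn
  have h9 : (9:ℝ) ≤ Kr m n ^ 2 := by nlinarith
  have h0 : (0:ℝ) ≤ Kr m n ^ 2 := by positivity
  have h1 := mul_le_mul_of_nonneg_right h9 h0
  have h2 : Kr m n ^ 2 * Kr m n ^ 2 = Kr m n ^ 4 := by ring
  nlinarith

lemma smallM (hm : 1 ≤ m) (hn : 1 ≤ n) : eps m n * (m : ℝ) ^ 2 < 1 := by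
  have hK := Kr_ge3 m n hm hn
  have hm' := m_le_Kr m n
  have h0m : (0:ℝ) ≤ m := Nat.cast_nonneg m
  have h4 : (0:ℝ) < Kr m n ^ 4 := by positivity
  have hiff : eps m n * (m : ℝ) ^ 2 = (m : ℝ) ^ 2 / Kr m n ^ 4 := by unfold eps; ring
  rw [hiff, div_lt_one h4]
  have h2 : (m:ℝ)^2 ≤ Kr m n ^ 2 := pow_le_pow_left₀ h0m hm' 2
  linarith [K24 m n hm hn]

lemma smallN (hm : 1 ≤ m) (hn : 1 ≤ n) : eps m n * (n : ℝ) ^ 2 < 1 := by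
  have hK := Kr_ge3 m n hm hn
  have hn' := n_le_Kr m n
  have h0n : (0:ℝ) ≤ n := Nat.cast_nonneg n
  have h4 : (0:ℝ) < Kr m n ^ 4 := by positivity
  have hiff : eps m n * (n : ℝ) ^ 2 = (n : ℝ) ^ 2 / Kr m n ^ 4 := by unfold eps; ring
  rw [hiff, div_lt_one h4]
  have h2 : (n:ℝ)^2 ≤ Kr m n ^ 2 := pow_le_pow_left₀ h0n hn' 2
  linarith [K24 m n hm hn]

lemma smallC1 (hm : 1 ≤ m) (hn : 1 ≤ n) :
    eps m n * (eps m n * (n : ℝ) ^ 2 * (2 * (m : ℝ)) + (m : ℝ) ^ 2) < 1 := by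
  have hK := Kr_ge3 m n hm hn
  have hm' := m_le_Kr m n
  have hn' := n_le_Kr m n
  have h0m : (0:ℝ) ≤ m := Nat.cast_nonneg m
  have h0n : (0:ℝ) ≤ n := Nat.cast_nonneg n
  have he := eps_pos m n
  have h4 : (0:ℝ) < Kr m n ^ 4 := by positivity
  have hn2 : (n:ℝ)^2 ≤ Kr m n ^ 2 := pow_le_pow_left₀ h0n hn' 2
  have hm2 : (m:ℝ)^2 ≤ Kr m n ^ 2 := pow_le_pow_left₀ h0m hm' 2
  have h1 : eps m n * (n : ℝ) ^ 2 * (2 * (m : ℝ)) ≤ 2 := by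
    have hiff : eps m n * (n : ℝ) ^ 2 * (2 * (m : ℝ))
        = ((n : ℝ) ^ 2 * (2 * (m : ℝ))) / Kr m n ^ 4 := by unfold eps; ring
    rw [hiff, div_le_iff₀ h4]
    have e1 : (n:ℝ)^2*(2*(m:ℝ)) ≤ Kr m n ^2*(2*Kr m n) :=
      mul_le_mul hn2 (by linarith) (by positivity) (by positivity)
    have e2 : Kr m n ^2*(2*Kr m n) = 2*Kr m n ^3 := by ring
    have e3 : Kr m n ^3 ≤ Kr m n ^4 := pow_le_pow_right₀ (by linarith) (by norm_num)
    linarith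
  have h3 : eps m n * (2 + Kr m n ^ 2) < 1 := by
    have hiff : eps m n * (2 + Kr m n ^ 2) = (2 + Kr m n ^ 2) / Kr m n ^ 4 := by
      unfold eps; ring
    rw [hiff, div_lt_one h4]
    linarith [K24 m n hm hn]
  calc eps m n * (eps m n * (n : ℝ) ^ 2 * (2 * (m : ℝ)) + (m : ℝ) ^ 2)
      ≤ eps m n * (2 + Kr m n ^ 2) := by
        apply mul_le_mul_of_nonneg_left _ he.le; linarith
    _ < 1 := h3

lemma smallC2 (hm : 1 ≤ m) (hn : 1 ≤ n) :
    eps m n * ((n : ℝ) ^ 2 + eps m n * (m : ℝ) ^ 2 * (2 * (n : ℝ))) < 1 := by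
  have hK := Kr_ge3 m n hm hn
  have hm' := m_le_Kr m n
  have hn' := n_le_Kr m n
  have h0m : (0:ℝ) ≤ m := Nat.cast_nonneg m
  have h0n : (0:ℝ) ≤ n := Nat.cast_nonneg n
  have he := eps_pos m n
  have h4 : (0:ℝ) < Kr m n ^ 4 := by positivity
  have hn2 : (n:ℝ)^2 ≤ Kr m n ^ 2 := pow_le_pow_left₀ h0n hn' 2
  have hm2 : (m:ℝ)^2 ≤ Kr m n ^ 2 := pow_le_pow_left₀ h0m hm' 2
  have h1 : eps m n * (m : ℝ) ^ 2 * (2 * (n : ℝ)) ≤ 2 := by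
    have hiff : eps m n * (m : ℝ) ^ 2 * (2 * (n : ℝ))
        = ((m : ℝ) ^ 2 * (2 * (n : ℝ))) / Kr m n ^ 4 := by unfold eps; ring
    rw [hiff, div_le_iff₀ h4]
    have e1 : (m:ℝ)^2*(2*(n:ℝ)) ≤ Kr m n ^2*(2*Kr m n) :=
      mul_le_mul hm2 (by linarith) (by positivity) (by positivity)
    have e2 : Kr m n ^2*(2*Kr m n) = 2*Kr m n ^3 := by ring
    have e3 : Kr m n ^3 ≤ Kr m n ^4 := pow_le_pow_right₀ (by linarith) (by norm_num)
    linarith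
  have h3 : eps m n * (Kr m n ^ 2 + 2) < 1 := by
    have hiff : eps m n * (Kr m n ^ 2 + 2) = (Kr m n ^ 2 + 2) / Kr m n ^ 4 := by
      unfold eps; ring
    rw [hiff, div_lt_one h4]
    linarith [K24 m n hm hn]
  calc eps m n * ((n : ℝ) ^ 2 + eps m n * (m : ℝ) ^ 2 * (2 * (n : ℝ)))
      ≤ eps m n * (Kr m n ^ 2 + 2) := by
        apply mul_le_mul_of_nonneg_left _ he.le; linarith
    _ < 1 := h3

end Small

/-! ### Non-collinearity -/

lemma DD_swap (u v : ℝ × ℝ) : DD u v = -DD v u := by simp only [DD]; ring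

section NC
variable {e Mr Nr : ℝ}

lemma noncolPPP (he : 0 < e) {a b c : ℝ} (hab : a ≠ b) (hac : a ≠ c) (hbc : b ≠ c) :
    ¬ Collinear ℝ ({Pt e a, Pt e b, Pt e c} : Set (ℝ × ℝ)) := by
  apply not_collinear_of_DD
  rw [DD_PPP]
  exact mul_ne_zero he.ne'
    (mul_ne_zero (mul_ne_zero (sub_ne_zero.2 (Ne.symm hab)) (sub_ne_zero.2 (Ne.symm hac)))
      (sub_ne_zero.2 (Ne.symm hbc)))

lemma noncolQQQ (he : 0 < e) {a b c : ℝ} (hab : a ≠ b) (hac : a ≠ c) (hbc : b ≠ c) :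
    ¬ Collinear ℝ ({Qt e a, Qt e b, Qt e c} : Set (ℝ × ℝ)) := by
  apply not_collinear_of_DD
  rw [DD_QQQ]
  exact mul_ne_zero he.ne'
    (mul_ne_zero (mul_ne_zero (sub_ne_zero.2 (Ne.symm hab)) (sub_ne_zero.2 (Ne.symm hac)))
      (sub_ne_zero.2 (Ne.symm hbc)))

lemma noncolPPQ (he : 0 < e) (hC1 : e * (e * Nr ^ 2 * (2 * Mr) + Mr ^ 2) < 1)
    {a b c : ℝ} (haM : |a| ≤ Mr) (hbM : |b| ≤ Mr) (hc1 : 1 ≤ |c|) (hcN : |c| ≤ Nr)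
    (hab : a ≠ b) :
    ¬ Collinear ℝ ({Pt e a, Pt e b, Qt e c} : Set (ℝ × ℝ)) := by
  apply not_collinear_of_DD
  rw [show DD (Pt e b - Pt e a) (Qt e c - Pt e a) = -((b - a) * Bx e a b c) from by
    rw [DD_swap, DD_PP]]
  apply neg_ne_zero.2
  apply mul_ne_zero (sub_ne_zero.2 (Ne.symm hab))
  intro h0
  have hs := Bx_sign he hC1 haM hbM hc1 hcN
  rw [h0, mul_zero] at hs
  exact lt_irrefl 0 hs

lemma noncolPQQ (he : 0 < e) (hC2 : e * (Nr ^ 2 + e * Mr ^ 2 * (2 * Nr)) < 1)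
    {a c d : ℝ} (ha1 : 1 ≤ |a|) (haM : |a| ≤ Mr) (hcN : |c| ≤ Nr) (hdN : |d| ≤ Nr)
    (hcd : c ≠ d) :
    ¬ Collinear ℝ ({Pt e a, Qt e c, Qt e d} : Set (ℝ × ℝ)) := by
  apply not_collinear_of_DD
  rw [DD_QQ]
  apply mul_ne_zero (sub_ne_zero.2 (Ne.symm hcd))
  intro h0
  have hs := By_sign he hC2 ha1 haM hcN hdN (d := d)
  rw [h0, mul_zero] at hs
  exact lt_irrefl 0 hs

end NC

/-! ### The drawing map -/

def drawF (m n : ℕ) : Fin m ⊕ Fin n → ℝ × ℝ :=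
  Sum.elim (fun i => Pt (eps m n) ((Uf m i : ℤ) : ℝ))
    (fun j => Qt (eps m n) ((Uf n j : ℤ) : ℝ))

lemma Uf_cast_lb (mm : ℕ) (i : Fin mm) : 1 ≤ |((Uf mm i : ℤ) : ℝ)| := by
  have := Uf_lb mm i; exact_mod_cast this

lemma Uf_cast_ub (mm : ℕ) (i : Fin mm) : |((Uf mm i : ℤ) : ℝ)| ≤ (mm : ℝ) := by
  have := Uf_ub mm i; exact_mod_cast this

lemma Uf_cast_ne (mm : ℕ) {i i' : Fin mm} (h : i ≠ i') :
    ((Uf mm i : ℤ) : ℝ) ≠ ((Uf mm i' : ℤ) : ℝ) := by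
  intro hc
  exact h (Uf_inj mm (by exact_mod_cast hc))

lemma sq_cast_lt (mm nn : ℕ) (j : Fin nn) (hm : 1 ≤ mm) (hn : 1 ≤ nn)
    (hsm : eps mm nn * (nn : ℝ) ^ 2 < 1) :
    eps mm nn * ((Uf nn j : ℤ) : ℝ) ^ 2 < 1 := by
  have h1 := Uf_cast_ub nn j
  have h2 : ((Uf nn j : ℤ) : ℝ) ^ 2 ≤ (nn : ℝ) ^ 2 := by
    nlinarith [abs_nonneg ((Uf nn j : ℤ) : ℝ), sq_abs ((Uf nn j : ℤ) : ℝ)]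
  have he := eps_pos mm nn
  nlinarith

lemma drawF_rect (m n : ℕ) (hm : 1 ≤ m) (hn : 1 ≤ n) :
    IsRectilinearDrawing (drawF m n) := by
  have he := eps_pos m n
  have hC1 := smallC1 m n hm hn
  have hC2 := smallC2 m n hm hn
  have heM := smallM m n hm hn
  have heN := smallN m n hm hn
  constructor
  · -- injectivity
    rintro (i | j) (i' | j') hxy
    · simp only [drawF, Sum.elim_inl, Pt, Prod.mk.injEq] at hxy
      exact congrArg Sum.inl (Uf_inj m (by exact_mod_cast hxy.1))
    · exfalso
      simp only [drawF, Sum.elim_inl, Sum.elim_inr, Pt, Qt, Prod.mk.injEq] at hxy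
      have hlb := Uf_cast_lb m i
      have hsq := sq_cast_lt m n j' hm hn heN
      have h0 : 0 ≤ eps m n * ((Uf n j' : ℤ) : ℝ) ^ 2 := by positivity
      rcases abs_cases ((Uf m i : ℤ) : ℝ) with ⟨h1, h2⟩ | ⟨h1, h2⟩ <;> linarith [hxy.1]
    · exfalso
      simp only [drawF, Sum.elim_inl, Sum.elim_inr, Pt, Qt, Prod.mk.injEq] at hxy
      have hlb := Uf_cast_lb m i'
      have hsq := sq_cast_lt m n j hm hn heN
      have h0 : 0 ≤ eps m n * ((Uf n j : ℤ) : ℝ) ^ 2 := by positivity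
      rcases abs_cases ((Uf m i' : ℤ) : ℝ) with ⟨h1, h2⟩ | ⟨h1, h2⟩ <;> linarith [hxy.1]
    · simp only [drawF, Sum.elim_inr, Qt, Prod.mk.injEq] at hxy
      exact congrArg Sum.inr (Uf_inj n (by exact_mod_cast hxy.2))
  · -- no three collinear
    rintro (i | j) (i' | j') (i'' | j'') hxy hxz hyz <;>
      simp only [drawF, Sum.elim_inl, Sum.elim_inr]
    · exact noncolPPP he (Uf_cast_ne m (fun h => hxy (congrArg Sum.inl h)))
        (Uf_cast_ne m (fun h => hxz (congrArg Sum.inl h)))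
        (Uf_cast_ne m (fun h => hyz (congrArg Sum.inl h)))
    · exact noncolPPQ he hC1 (Uf_cast_ub m i) (Uf_cast_ub m i') (Uf_cast_lb n j'')
        (Uf_cast_ub n j'') (Uf_cast_ne m (fun h => hxy (congrArg Sum.inl h)))
    · rw [Set.pair_comm]
      exact noncolPPQ he hC1 (Uf_cast_ub m i) (Uf_cast_ub m i'') (Uf_cast_lb n j')
        (Uf_cast_ub n j') (Uf_cast_ne m (fun h => hxz (congrArg Sum.inl h)))
    · exact noncolPQQ he hC2 (Uf_cast_lb m i) (Uf_cast_ub m i) (Uf_cast_ub n j')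
        (Uf_cast_ub n j'') (Uf_cast_ne n (fun h => hyz (congrArg Sum.inr h)))
    · rw [Set.insert_comm, Set.pair_comm]
      exact noncolPPQ he hC1 (Uf_cast_ub m i') (Uf_cast_ub m i'') (Uf_cast_lb n j)
        (Uf_cast_ub n j) (Uf_cast_ne m (fun h => hyz (congrArg Sum.inl h)))
    · rw [Set.insert_comm]
      exact noncolPQQ he hC2 (Uf_cast_lb m i') (Uf_cast_ub m i') (Uf_cast_ub n j)
        (Uf_cast_ub n j'') (Uf_cast_ne n (fun h => hxz (congrArg Sum.inr h)))
    · rw [Set.pair_comm, Set.insert_comm]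
      exact noncolPQQ he hC2 (Uf_cast_lb m i'') (Uf_cast_ub m i'') (Uf_cast_ub n j)
        (Uf_cast_ub n j') (Uf_cast_ne n (fun h => hxy (congrArg Sum.inr h)))
    · exact noncolQQQ he (Uf_cast_ne n (fun h => hxy (congrArg Sum.inr h)))
        (Uf_cast_ne n (fun h => hxz (congrArg Sum.inr h)))
        (Uf_cast_ne n (fun h => hyz (congrArg Sum.inr h)))

/-! ### Edges of the complete bipartite graph -/

lemma edge_form {m n : ℕ} {x : Sym2 (Fin m ⊕ Fin n)}
    (hx : x ∈ (completeBipartiteGraph (Fin m) (Fin n)).edgeSet) :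
    ∃ i j, x = s(Sum.inl i, Sum.inr j) := by
  induction x using Sym2.ind with
  | _ u v =>
    rw [SimpleGraph.mem_edgeSet] at hx
    rcases u with i | j <;> rcases v with i' | j'
    · simp [completeBipartiteGraph] at hx
    · exact ⟨i, j', rfl⟩
    · exact ⟨i', j, Sym2.eq_swap⟩
    · simp [completeBipartiteGraph] at hx

/-! ### The charged set -/

def AA (mm : ℕ) : Finset (Fin mm × Fin mm) :=
  univ.filter fun x => Uf mm x.1 < Uf mm x.2 ∧ 0 < Uf mm x.1 * Uf mm x.2

def gg (m n : ℕ) (w : (Fin m × Fin m) × (Fin n × Fin n)) :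
    Sym2 (Sym2 (Fin m ⊕ Fin n)) :=
  if 0 < Uf m w.1.1 * Uf n w.2.1 then
    s(s(Sum.inl w.1.1, Sum.inr w.2.2), s(Sum.inl w.1.2, Sum.inr w.2.1))
  else
    s(s(Sum.inl w.1.1, Sum.inr w.2.1), s(Sum.inl w.1.2, Sum.inr w.2.2))

lemma build {m n : ℕ} (i i' : Fin m) (j j' : Fin n)
    (hU : Uf m i < Uf m i') (hsU : 0 < Uf m i * Uf m i') (hsW : 0 < Uf n j * Uf n j')
    (hT : (Uf m i' - Uf m i) * (Uf n j' - Uf n j) * Uf m i * Uf n j < 0) :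
    s(s(Sum.inl i, Sum.inr j), s(Sum.inl i', Sum.inr j'))
      ∈ (AA m ×ˢ AA n).image (gg m n) := by
  rcases lt_trichotomy (Uf n j) (Uf n j') with hW | hW | hW
  · -- j before j' in value order ⇒ Uf i * Uf j < 0
    have hX : 0 < (Uf m i' - Uf m i) * (Uf n j' - Uf n j) :=
      mul_pos (by omega) (by omega)
    have hUW : Uf m i * Uf n j < 0 := by
      by_contra hcon
      push_neg at hcon
      nlinarith
    apply Finset.mem_image.2
    refine ⟨((i, i'), (j, j')), ?_, ?_⟩
    · rw [Finset.mem_product]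
      constructor <;> rw [AA, Finset.mem_filter]
      · exact ⟨mem_univ _, hU, hsU⟩
      · exact ⟨mem_univ _, hW, hsW⟩
    · rw [gg, if_neg (not_lt.2 hUW.le)]
  · exfalso; rw [hW] at hT; simp at hT
  · -- j' before j in value order ⇒ Uf i * Uf j > 0
    have hX : (Uf m i' - Uf m i) * (Uf n j' - Uf n j) < 0 :=
      mul_neg_of_pos_of_neg (by omega) (by omega)
    have hUW : 0 < Uf m i * Uf n j := by
      by_contra hcon
      push_neg at hcon
      nlinarith
    have hUW' : 0 < Uf m i * Uf n j' := by
      rcases mul_pos_iff.1 hUW with ⟨h1, h2⟩ | ⟨h1, h2⟩ <;>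
        rcases mul_pos_iff.1 hsW with ⟨h1', h2'⟩ | ⟨h1', h2'⟩
      · exact mul_pos h1 h2'
      · linarith
      · linarith
      · exact mul_pos_of_neg_of_neg h1 h2'
    apply Finset.mem_image.2
    refine ⟨((i, i'), (j', j)), ?_, ?_⟩
    · rw [Finset.mem_product]
      constructor <;> rw [AA, Finset.mem_filter]
      · exact ⟨mem_univ _, hU, hsU⟩
      · exact ⟨mem_univ _, hW, by rwa [mul_comm]⟩
    · rw [gg, if_pos hUW']

end
end S16

/-- Zarankiewicz's bound:
`rcr(K_{m,n}) ≤ ⌊m/2⌋·⌊(m−1)/2⌋·⌊n/2⌋·⌊(n−1)/2⌋`. -/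
theorem stmt16 (m n : ℕ) (hm : 0 < m) (hn : 0 < n) :
    rcr (completeBipartiteGraph (Fin m) (Fin n))
      ≤ m / 2 * ((m - 1) / 2) * (n / 2) * ((n - 1) / 2) := by
  classical
  set G := completeBipartiteGraph (Fin m) (Fin n) with hG
  set f := S16.drawF m n with hf
  have hdraw : IsRectilinearDrawing f := S16.drawF_rect m n hm hn
  have hstep : rcr G ≤ crossingNumber G f := Nat.sInf_le ⟨f, hdraw, rfl⟩
  refine hstep.trans ?_
  have he := S16.eps_pos m n
  have hC1 := S16.smallC1 m n hm hn
  have hC2 := S16.smallC2 m n hm hn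
  have heM := S16.smallM m n hm hn
  have heN := S16.smallN m n hm hn
  have hsub : {p : Sym2 (Sym2 (Fin m ⊕ Fin n)) |
      (∀ e ∈ p, e ∈ G.edgeSet) ∧ p ∈ Sym2.fromRel (⟨fun _ _ h => edgesCross_symm f h⟩ : Std.Symm (EdgesCross f))} ⊆
      ↑((S16.AA m ×ˢ S16.AA n).image (S16.gg m n)) := by
    intro p
    induction p using Sym2.ind with
    | _ e1 e2 =>
      intro hp
      obtain ⟨hedge, hrel⟩ := hp
      have h1 : e1 ∈ G.edgeSet := hedge e1 (Sym2.mem_mk_left e1 e2)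
      have h2 : e2 ∈ G.edgeSet := hedge e2 (Sym2.mem_mk_right e1 e2)
      obtain ⟨i, j, rfl⟩ := S16.edge_form h1
      obtain ⟨i', j', rfl⟩ := S16.edge_form h2
      have hcross : EdgesCross f s(Sum.inl i, Sum.inr j) s(Sum.inl i', Sum.inr j') :=
        Sym2.fromRel_prop.1 hrel
      have hii : i ≠ i' := by
        intro h
        exact hcross.1 (Sum.inl i) (Sym2.mem_mk_left _ _)
          (by rw [h]; exact Sym2.mem_mk_left _ _)
      have hjj : j ≠ j' := by
        intro h
        exact hcross.1 (Sum.inr j) (Sym2.mem_mk_right _ _)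
          (by rw [h]; exact Sym2.mem_mk_right _ _)
      have hne : (openSegment ℝ (S16.Pt (S16.eps m n) ((S16.Uf m i : ℤ) : ℝ))
            (S16.Qt (S16.eps m n) ((S16.Uf n j : ℤ) : ℝ)) ∩
          openSegment ℝ (S16.Pt (S16.eps m n) ((S16.Uf m i' : ℤ) : ℝ))
            (S16.Qt (S16.eps m n) ((S16.Uf n j' : ℤ) : ℝ))).Nonempty := hcross.2
      obtain ⟨hab, hcd, hTac, hTbd⟩ := S16.pair_cross he hC1 hC2 heM heN
        (S16.Uf_cast_lb m i) (S16.Uf_cast_ub m i)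
        (S16.Uf_cast_lb m i') (S16.Uf_cast_ub m i')
        (S16.Uf_cast_lb n j) (S16.Uf_cast_ub n j)
        (S16.Uf_cast_lb n j') (S16.Uf_cast_ub n j')
        (S16.Uf_cast_ne m hii) (S16.Uf_cast_ne n hjj) hne
      have hsU : 0 < S16.Uf m i * S16.Uf m i' := by exact_mod_cast hab
      have hsW : 0 < S16.Uf n j * S16.Uf n j' := by exact_mod_cast hcd
      have hTac' : (S16.Uf m i' - S16.Uf m i) * (S16.Uf n j' - S16.Uf n j)
          * S16.Uf m i * S16.Uf n j < 0 := by exact_mod_cast hTac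
      have hTbd' : (S16.Uf m i - S16.Uf m i') * (S16.Uf n j - S16.Uf n j')
          * S16.Uf m i' * S16.Uf n j' < 0 := by exact_mod_cast hTbd
      rcases lt_trichotomy (S16.Uf m i) (S16.Uf m i') with hU | hU | hU
      · exact S16.build i i' j j' hU hsU hsW hTac'
      · exact absurd (S16.Uf_inj m hU) hii
      · have hmem := S16.build i' i j' j hU (by rwa [mul_comm])
          (by rwa [mul_comm]) hTbd'
        rw [Sym2.eq_swap]
        exact hmem
  calc crossingNumber G f
      ≤ ((S16.AA m ×ˢ S16.AA n).image (S16.gg m n)).card := by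
        rw [← Set.ncard_coe_finset]
        exact Set.ncard_le_ncard hsub (Finset.finite_toSet _)
    _ ≤ (S16.AA m ×ˢ S16.AA n).card := Finset.card_image_le
    _ = (S16.AA m).card * (S16.AA n).card := Finset.card_product _ _
    _ = m / 2 * ((m - 1) / 2) * (n / 2) * ((n - 1) / 2) := by
        rw [S16.AA, S16.AA, S16.cardA m, S16.cardA n]
        ring
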